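/- Let r ∈ {3,5}, let q be an odd prime distinct from r, and let R = C_q × D_{2r} = ⟨z⟩ × (⟨y⟩ ⋊ ⟨x⟩) with |z| = q, |y| = r, |x| = 2. Let S ⊆ R with S = S⁻¹. Suppose H = ⟨x, z⟩ ≅ C_{2q}, K = ⟨z⟩ ≅ C_q, and K(S\H) = S\H. Then the map α defined by (x^i y^j z^k)^α = x^i y^j z^{−k} is an automorphism of R fixing S setwise, and α ≠ 1. -/
import Mathlib


open scoped Pointwise

private lemma sr_inv {n : ℕ} (i : ZMod n) :
    (DihedralGroup.sr i)⁻¹ = DihedralGroup.sr i := by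
  symm
  rw [eq_inv_iff_mul_eq_one, DihedralGroup.sr_mul_sr, sub_self, DihedralGroup.one_def]

/-- in `R = C_q × D_{2r}` (`r ∈ {3,5}`, `q` an odd prime, `q ≠ r`),
with `H = ⟨x,z⟩ ≅ C_{2q}`, `K = ⟨z⟩ ≅ C_q` and `K(S\H) = S\H` for an inverse-closed
`S`, the map `x^i y^j z^k ↦ x^i y^j z^{-k}` is a nontrivial automorphism fixing `S`. -/
theorem stmt15 (n q : ℕ) (hn : n = 3 ∨ n = 5) (hq : q.Prime) (hqodd : Odd q)
    (hqn : q ≠ n)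
    (S : Set (Multiplicative (ZMod q) × DihedralGroup n)) (hS : S⁻¹ = S)
    (H K : Subgroup (Multiplicative (ZMod q) × DihedralGroup n))
    (hH : H = Subgroup.closure
      {((1 : Multiplicative (ZMod q)), DihedralGroup.sr 0),
       (Multiplicative.ofAdd (1 : ZMod q), (1 : DihedralGroup n))})
    (hK : K = Subgroup.closure
      {(Multiplicative.ofAdd (1 : ZMod q), (1 : DihedralGroup n))})
    (h1 : (K : Set (Multiplicative (ZMod q) × DihedralGroup n)) *
        (S \ (H : Set (Multiplicative (ZMod q) × DihedralGroup n))) =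
      S \ (H : Set (Multiplicative (ZMod q) × DihedralGroup n))) :
    ∃ α : MulAut (Multiplicative (ZMod q) × DihedralGroup n),
      (∀ (c : Multiplicative (ZMod q)) (d : DihedralGroup n), α (c, d) = (c⁻¹, d)) ∧
      α '' S = S ∧ α ≠ 1 := by
  haveI : Fact q.Prime := ⟨hq⟩
  set α : MulAut (Multiplicative (ZMod q) × DihedralGroup n) :=
    MulEquiv.prodCongr (MulEquiv.inv _) (MulEquiv.refl _) with hα
  have happ : ∀ (c : Multiplicative (ZMod q)) (d : DihedralGroup n),
      α (c, d) = (c⁻¹, d) := fun c d => rfl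
  -- every (c, 1) is in K
  have hKmem : ∀ c : Multiplicative (ZMod q),
      (c, (1 : DihedralGroup n)) ∈ K := by
    intro c
    rw [hK, Subgroup.mem_closure_singleton]
    refine ⟨((c.toAdd).val : ℤ), ?_⟩
    rw [Prod.pow_def, one_zpow]
    congr 1
    show Multiplicative.ofAdd (((c.toAdd).val : ℤ) • (1 : ZMod q)) = c
    rw [zsmul_eq_mul, mul_one]
    push_cast
    rw [ZMod.natCast_val, ZMod.cast_id]
    rfl
  -- membership characterization of H on second coordinate
  have hHsnd : ∀ g ∈ H, g.2 = 1 ∨ g.2 = DihedralGroup.sr 0 := by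
    intro g hg
    have : H ≤ (Subgroup.closure {DihedralGroup.sr 0}).comap
        (MonoidHom.snd (Multiplicative (ZMod q)) (DihedralGroup n)) := by
      rw [hH, Subgroup.closure_le]
      rintro x (rfl | rfl) <;>
        simp [Subgroup.mem_comap, Subgroup.subset_closure, Set.mem_singleton_iff,
          Subgroup.one_mem]
    have h2 := this hg
    rw [Subgroup.mem_comap, Subgroup.mem_closure_singleton] at h2
    obtain ⟨k, hk⟩ := h2
    have hk' : (DihedralGroup.sr (0 : ZMod n)) ^ k = g.2 := hk
    have hsq : (DihedralGroup.sr (0 : ZMod n)) ^ (2 : ℤ) = 1 := by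
      rw [zpow_two, DihedralGroup.sr_mul_sr, sub_self, DihedralGroup.one_def]
    rcases Int.even_or_odd k with ⟨m, hm⟩ | ⟨m, hm⟩
    · left
      rw [← hk', hm, ← two_mul, zpow_mul, hsq, one_zpow]
    · right
      rw [← hk', hm, zpow_add, zpow_mul, hsq, one_zpow, one_mul, zpow_one]
  -- α maps S into S
  have hsub : ∀ s ∈ S, α s ∈ S := by
    rintro ⟨c, d⟩ hs
    by_cases hmem : (c, d) ∈ (H : Set (Multiplicative (ZMod q) × DihedralGroup n))
    · rcases hHsnd _ hmem with rfl | rfl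
      · have : α (c, (1 : DihedralGroup n)) = (c, 1)⁻¹ := by
          rw [happ, Prod.inv_mk, inv_one]
        rw [this, ← hS]
        exact Set.inv_mem_inv.mpr hs
      · have : α (c, DihedralGroup.sr 0) = (c, DihedralGroup.sr 0)⁻¹ := by
          rw [happ, Prod.inv_mk, sr_inv]
        rw [this, ← hS]
        exact Set.inv_mem_inv.mpr hs
    · have hdiff : (c, d) ∈ S \ (H : Set _) := ⟨hs, hmem⟩
      have : α (c, d) = (c⁻¹ * c⁻¹, (1 : DihedralGroup n)) * (c, d) := by
        rw [happ, Prod.mk_mul_mk, one_mul, mul_assoc, inv_mul_cancel, mul_one]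
      rw [this]
      have := Set.mul_mem_mul (hKmem (c⁻¹ * c⁻¹)) hdiff
      rw [h1] at this
      exact this.1
  have hinv : ∀ g, α (α g) = g := by
    rintro ⟨c, d⟩
    rw [happ, happ, inv_inv]
  refine ⟨α, happ, ?_, ?_⟩
  · apply Set.Subset.antisymm
    · rintro _ ⟨s, hs, rfl⟩
      exact hsub s hs
    · intro s hs
      exact ⟨α s, hsub s hs, hinv s⟩
  · intro h
    have h2 : (2 : ZMod q) ≠ 0 := by
      intro h2
      have hq2 : q ∣ 2 := (ZMod.natCast_eq_zero_iff 2 q).mp (by exact_mod_cast h2)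
      have hle := Nat.le_of_dvd (by norm_num) hq2
      have h2le := hq.two_le
      interval_cases q
      simp [Nat.odd_iff] at hqodd
    have := congrArg (fun f : MulAut (Multiplicative (ZMod q) × DihedralGroup n) =>
      f (Multiplicative.ofAdd (1 : ZMod q), (1 : DihedralGroup n))) h
    simp only [happ, MulAut.one_apply] at this
    have h3 : (Multiplicative.ofAdd (1 : ZMod q))⁻¹ = Multiplicative.ofAdd (1 : ZMod q) :=
      congrArg Prod.fst this
    have h4 : (-1 : ZMod q) = 1 := by
      have := congrArg Multiplicative.toAdd h3
      simpa using this
    apply h2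
    linear_combination -h4
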